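/- The maps Π^• form a cochain projection on the twisted complex: Π^{i+1} ∘ 𝒜^i = 𝒜^i ∘ Π^i for every 0 ≤ i ≤ n−1, and Π^i ∘ Π^i = Π^i for every 0 ≤ i ≤ n. -/

import Mathlib

/-!
STATEMENT 9: the maps `Π^•` form a cochain projection on the twisted complex
`(Y^•, 𝒜^•)`: `Π^{i+1} ∘ 𝒜^i = 𝒜^i ∘ Π^i` for `0 ≤ i ≤ n−1`, and `Π^i ∘ Π^i = Π^i` for
`0 ≤ i ≤ n`.  Here `Π^i(ω,μ) = (P_{(ran S^{i-1})^⊥} ω, T^{i+1} D^i P_{(ran S^{i-1})^⊥} ω)`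
for `i ≤ J`, and `Π^i(ω,μ) = (0, P_{ker S^i}(μ + D̃^{i-1} T^i ω))` for `J < i ≤ n`.
-/

noncomputable section

/-- `P_{ran S^{i-1}} : Z^i → Z^i` (with `P_{ran S^{-1}} = 0`). -/
def projS {Z : ℕ → Type*}
    [∀ i, NormedAddCommGroup (Z i)] [∀ i, InnerProductSpace ℝ (Z i)]
    (Pran : ∀ i, Z (i + 1) →L[ℝ] Z (i + 1)) : ∀ i, Z i →L[ℝ] Z i
  | 0 => 0
  | m + 1 => Pran m

/-- The twisted differential `𝒜^i(ω, μ) = (D^i ω − S^i μ, D̃^i μ)`. -/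
def twistA {Z Zt : ℕ → Type*}
    [∀ i, NormedAddCommGroup (Z i)] [∀ i, InnerProductSpace ℝ (Z i)]
    [∀ i, NormedAddCommGroup (Zt i)] [∀ i, InnerProductSpace ℝ (Zt i)]
    (D : ∀ i, Z i →L[ℝ] Z (i + 1)) (Dt : ∀ i, Zt i →L[ℝ] Zt (i + 1))
    (S : ∀ i, Zt i →L[ℝ] Z (i + 1)) (i : ℕ) :
    (Z i × Zt i) →L[ℝ] (Z (i + 1) × Zt (i + 1)) :=
  ((D i).comp (ContinuousLinearMap.fst ℝ (Z i) (Zt i))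
      - (S i).comp (ContinuousLinearMap.snd ℝ (Z i) (Zt i))).prod
    ((Dt i).comp (ContinuousLinearMap.snd ℝ (Z i) (Zt i)))

/-- The cochain projection `Π^i : Y^i → Y^i`:
`Π^i(ω,μ) = (P_{(ran S^{i-1})^⊥} ω, T^{i+1} D^i P_{(ran S^{i-1})^⊥} ω)` for `i ≤ J`, and
`Π^i(ω,μ) = (0, P_{ker S^i}(μ + D̃^{i-1} T^i ω))` for `i > J` (the case `i = 0 > J` is
vacuous since `J ≥ 0`). -/
def piMap {Z Zt : ℕ → Type*}
    [∀ i, NormedAddCommGroup (Z i)] [∀ i, InnerProductSpace ℝ (Z i)]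
    [∀ i, NormedAddCommGroup (Zt i)] [∀ i, InnerProductSpace ℝ (Zt i)]
    (D : ∀ i, Z i →L[ℝ] Z (i + 1)) (Dt : ∀ i, Zt i →L[ℝ] Zt (i + 1))
    (Pran : ∀ i, Z (i + 1) →L[ℝ] Z (i + 1)) (Pker : ∀ i, Zt i →L[ℝ] Zt i)
    (T : ∀ i, Z (i + 1) →L[ℝ] Zt i) (J : ℕ) (i : ℕ) :
    (Z i × Zt i) →L[ℝ] (Z i × Zt i) :=
  if i ≤ J then
    (((ContinuousLinearMap.id ℝ (Z i) - projS Pran i).comp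
        (ContinuousLinearMap.fst ℝ (Z i) (Zt i))).prod
      (((T i).comp ((D i).comp (ContinuousLinearMap.id ℝ (Z i) - projS Pran i))).comp
        (ContinuousLinearMap.fst ℝ (Z i) (Zt i))))
  else
    match i with
    | 0 => 0
    | m + 1 =>
      (0 : (Z (m + 1) × Zt (m + 1)) →L[ℝ] Z (m + 1)).prod
        ((Pker (m + 1)).comp
          ((ContinuousLinearMap.snd ℝ (Z (m + 1)) (Zt (m + 1)))
            + ((Dt m).comp (T m)).comp (ContinuousLinearMap.fst ℝ (Z (m + 1)) (Zt (m + 1)))))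


lemma proj_fix {E : Type*} [NormedAddCommGroup E] [InnerProductSpace ℝ E]
    (K : Submodule ℝ E) (P : E →L[ℝ] E)
    (hm : ∀ x, P x ∈ K) (ho : ∀ x, x - P x ∈ Kᗮ) {v : E} (hv : v ∈ K) : P v = v := by
  have h1 : v - P v ∈ K := K.sub_mem hv (hm v)
  have h3 : (inner ℝ (v - P v) (v - P v) : ℝ) = 0 :=
    (Submodule.mem_orthogonal K _).mp (ho v) _ h1
  exact (sub_eq_zero.mp (inner_self_eq_zero.mp h3)).symm

lemma proj_kill {E : Type*} [NormedAddCommGroup E] [InnerProductSpace ℝ E]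
    (K : Submodule ℝ E) (P : E →L[ℝ] E)
    (hm : ∀ x, P x ∈ K) (ho : ∀ x, x - P x ∈ Kᗮ) {v : E} (hv : v ∈ Kᗮ) : P v = 0 := by
  have h1 : P v ∈ Kᗮ := by
    have := Kᗮ.sub_mem hv (ho v)
    simpa using this
  have h3 : (inner ℝ (P v) (P v) : ℝ) = 0 :=
    (Submodule.mem_orthogonal K _).mp h1 _ (hm v)
  exact inner_self_eq_zero.mp h3

theorem stmt_9
    (n J : ℕ) (hn : 1 ≤ n) (hJn : J + 1 ≤ n)
    {Z Zt : ℕ → Type*}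
    [∀ i, NormedAddCommGroup (Z i)] [∀ i, InnerProductSpace ℝ (Z i)] [∀ i, CompleteSpace (Z i)]
    [∀ i, NormedAddCommGroup (Zt i)] [∀ i, InnerProductSpace ℝ (Zt i)] [∀ i, CompleteSpace (Zt i)]
    (D : ∀ i, Z i →L[ℝ] Z (i + 1)) (Dt : ∀ i, Zt i →L[ℝ] Zt (i + 1))
    (S : ∀ i, Zt i →L[ℝ] Z (i + 1))
    (Pran : ∀ i, Z (i + 1) →L[ℝ] Z (i + 1)) (Pker : ∀ i, Zt i →L[ℝ] Zt i)
    (T : ∀ i, Z (i + 1) →L[ℝ] Zt i)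
    (hDD : ∀ i (x : Z i), D (i + 1) (D i x) = 0)
    (hDtDt : ∀ i (x : Zt i), Dt (i + 1) (Dt i x) = 0)
    (hDtop : ∀ i, n ≤ i → D i = 0) (hDttop : ∀ i, n ≤ i → Dt i = 0)
    (hStop : ∀ i, n ≤ i → S i = 0)
    (hanti : ∀ i (x : Zt i), S (i + 1) (Dt i x) = -D (i + 1) (S i x))
    (hScl : ∀ i, IsClosed ((LinearMap.range (S i : Zt i →ₗ[ℝ] Z (i + 1)) : Submodule ℝ (Z (i + 1))) : Set (Z (i + 1))))
    (hSinj : ∀ i, i ≤ J → Function.Injective (S i))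
    (hSsurj : ∀ i, J ≤ i → i + 1 ≤ n → Function.Surjective (S i))
    (hPranMem : ∀ i (x : Z (i + 1)), Pran i x ∈ LinearMap.range (S i : Zt i →ₗ[ℝ] Z (i + 1)))
    (hPranOrth : ∀ i (x : Z (i + 1)), x - Pran i x ∈ (LinearMap.range (S i : Zt i →ₗ[ℝ] Z (i + 1)))ᗮ)
    (hPkerMem : ∀ i (x : Zt i), Pker i x ∈ LinearMap.ker (S i : Zt i →ₗ[ℝ] Z (i + 1)))
    (hPkerOrth : ∀ i (x : Zt i), x - Pker i x ∈ (LinearMap.ker (S i : Zt i →ₗ[ℝ] Z (i + 1)))ᗮ)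
    (hTzero : ∀ i, ∀ x ∈ (LinearMap.range (S i : Zt i →ₗ[ℝ] Z (i + 1)))ᗮ, T i x = 0)
    (hTS : ∀ i (x : Zt i), T i (S i x) = x - Pker i x)
    (hST : ∀ i (x : Z (i + 1)), S i (T i x) = Pran i x) :
    -- `Π` is a cochain map:
    (∀ i, i + 1 ≤ n → ∀ y : Z i × Zt i,
      piMap D Dt Pran Pker T J (i + 1) (twistA D Dt S i y)
        = twistA D Dt S i (piMap D Dt Pran Pker T J i y)) ∧
    -- `Π` is a projection:
    (∀ i, i ≤ n → ∀ y : Z i × Zt i,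
      piMap D Dt Pran Pker T J i (piMap D Dt Pran Pker T J i y)
        = piMap D Dt Pran Pker T J i y) := by
  have hps : ∀ m, projS Pran (m + 1) = Pran m := fun _ => rfl
  have hfix : ∀ i (z : Z (i + 1)), z ∈ LinearMap.range (S i : Zt i →ₗ[ℝ] Z (i + 1)) → Pran i z = z :=
    fun i z hz => proj_fix _ _ (hPranMem i) (hPranOrth i) hz
  have hkfix : ∀ i (z : Zt i), z ∈ LinearMap.ker (S i : Zt i →ₗ[ℝ] Z (i + 1)) → Pker i z = z :=
    fun i z hz => proj_fix _ _ (hPkerMem i) (hPkerOrth i) hz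
  have hkkill : ∀ i (z : Zt i), z ∈ (LinearMap.ker (S i : Zt i →ₗ[ℝ] Z (i + 1)))ᗮ → Pker i z = 0 :=
    fun i z hz => proj_kill _ _ (hPkerMem i) (hPkerOrth i) hz
  have hDP : ∀ i (x : Z i), ∃ y : Zt i, S i y = D i (projS Pran i x) ∧ Dt i y = 0 := by
    intro i x
    cases i with
    | zero => exact ⟨0, by simp [projS], by simp⟩
    | succ m =>
      obtain ⟨z, hz⟩ := hPranMem m x
      refine ⟨-Dt m z, ?_, by rw [map_neg, hDtDt, neg_zero]⟩
      show S (m + 1) (-Dt m z) = D (m + 1) (Pran m x)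
      rw [map_neg, hanti, neg_neg]; exact congrArg _ hz
  have hprojQ : ∀ j (x : Z j), projS Pran j (x - projS Pran j x) = 0 := by
    intro j x
    cases j with
    | zero => simp [projS]
    | succ m =>
      show Pran m (x - Pran m x) = 0
      rw [map_sub, hfix m _ (hPranMem m x), sub_self]
  constructor
  · -- cochain map property
    intro i hi y
    by_cases h2 : i ≤ J
    · obtain ⟨y0, hy0, hy0'⟩ := hDP i y.1
      have hfixp : Pran i (D i (projS Pran i y.1)) = D i (projS Pran i y.1) :=
        hfix i _ ⟨y0, hy0⟩
      have hfixS : Pran i (S i y.2) = S i y.2 := hfix i _ ⟨y.2, rfl⟩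
      by_cases h1 : i + 1 ≤ J
      · simp only [piMap, twistA, if_pos h1, if_pos h2, hps, ContinuousLinearMap.prod_apply,
          ContinuousLinearMap.comp_apply, ContinuousLinearMap.sub_apply,
          ContinuousLinearMap.add_apply, ContinuousLinearMap.id_apply,
          ContinuousLinearMap.coe_fst', ContinuousLinearMap.coe_snd',
          ContinuousLinearMap.zero_apply, Prod.mk.injEq]
        constructor
        · rw [hST]
          simp only [map_sub, hfixp, hfixS]
          abel
        · apply hSinj (i + 1) h1
          rw [hST, hanti, hST]
          have e1 : D (i + 1) (D i y.1 - S i y.2 - Pran i (D i y.1 - S i y.2))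
              = -(D (i + 1) (Pran i (D i y.1))) := by
            simp only [map_sub, hfixS, hDD]
            abel
          obtain ⟨w, hw⟩ := hPranMem i (D i y.1)
          have mem : D (i + 1) (Pran i (D i y.1)) ∈ LinearMap.range (S (i + 1) : Zt (i + 1) →ₗ[ℝ] Z ((i + 1) + 1)) :=
            ⟨-Dt i w, by rw [map_neg, ContinuousLinearMap.coe_coe, hanti, neg_neg]; exact congrArg _ hw⟩
          rw [e1, map_neg, hfix (i + 1) _ mem]
          simp only [map_sub, hfixp, hDD]
          abel
      · have hiJ : i = J := le_antisymm h2 (by omega)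
        subst hiJ
        have hsJ : Function.Surjective (S i) := hSsurj i le_rfl hi
        have hPranJ : ∀ x, Pran i x = x := fun x => hfix i x (hsJ x)
        have hPkerJ : ∀ x : Zt i, Pker i x = 0 := fun x =>
          hSinj i le_rfl (by rw [map_zero]; exact LinearMap.mem_ker.mp (hPkerMem i x))
        simp only [piMap, twistA, if_pos h2, if_neg h1,
          ContinuousLinearMap.prod_apply, ContinuousLinearMap.comp_apply,
          ContinuousLinearMap.sub_apply, ContinuousLinearMap.add_apply,
          ContinuousLinearMap.id_apply, ContinuousLinearMap.coe_fst',
          ContinuousLinearMap.coe_snd', ContinuousLinearMap.zero_apply, Prod.mk.injEq]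
        constructor
        · rw [hST, hPranJ, sub_self]
        · have hTv : T i (D i y.1 - S i y.2) = T i (D i y.1) - y.2 := by
            rw [map_sub, hTS, hPkerJ, sub_zero]
          have hRT : T i (D i (y.1 - projS Pran i y.1)) = T i (D i y.1) - y0 := by
            rw [map_sub, map_sub, ← hy0, hTS, hPkerJ, sub_zero]
          have hker : Dt i (T i (D i y.1)) ∈ LinearMap.ker (S (i + 1) : Zt (i + 1) →ₗ[ℝ] Z ((i + 1) + 1)) := by
            rw [LinearMap.mem_ker, ContinuousLinearMap.coe_coe, hanti, hST, hPranJ, hDD, neg_zero]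
          rw [hTv, hRT, map_sub, map_sub, hy0', sub_zero]
          have e2 : Dt i y.2 + (Dt i (T i (D i y.1)) - Dt i y.2)
              = Dt i (T i (D i y.1)) := by abel
          rw [e2, hkfix (i + 1) _ hker]
    · obtain ⟨m, rfl⟩ : ∃ m, i = m + 1 := ⟨i - 1, by omega⟩
      have hsm : Function.Surjective (S m) := hSsurj m (by omega) (by omega)
      have hsi : Function.Surjective (S (m + 1)) := hSsurj (m + 1) (by omega) hi
      have hPranm : ∀ x, Pran m x = x := fun x => hfix m x (hsm x)
      have hPrani : ∀ x, Pran (m + 1) x = x := fun x => hfix (m + 1) x (hsi x)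
      simp only [piMap, twistA, if_neg h2, if_neg (show ¬(m + 1 + 1 ≤ J) by omega),
        ContinuousLinearMap.prod_apply, ContinuousLinearMap.comp_apply,
        ContinuousLinearMap.sub_apply, ContinuousLinearMap.add_apply,
        ContinuousLinearMap.id_apply, ContinuousLinearMap.coe_fst',
        ContinuousLinearMap.coe_snd', ContinuousLinearMap.zero_apply, Prod.mk.injEq]
      set k := Dt m (T m y.1) + T (m + 1) (D (m + 1) y.1) with hkdef
      have hk : S (m + 1) k = 0 := by
        rw [hkdef, map_add, hanti, hST, hST, hPranm, hPrani, neg_add_cancel]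
      have hTker : ∀ z, Pker (m + 1) (T (m + 1) z) = 0 := by
        intro z
        obtain ⟨w, hw⟩ := hsi z
        rw [← hw, hTS]
        exact hkkill (m + 1) _ (hPkerOrth (m + 1) w)
      have hDtk : ∀ x : Zt (m + 1), S (m + 1) x = 0 →
          Pker (m + 1 + 1) (Dt (m + 1) x) = Dt (m + 1) x := fun x hx =>
        hkfix (m + 1 + 1) _ (LinearMap.mem_ker.mpr (by rw [ContinuousLinearMap.coe_coe, hanti, hx, map_zero, neg_zero]))
      constructor
      · rw [map_zero, ← ContinuousLinearMap.coe_coe (S (m + 1)), LinearMap.mem_ker.mp (hPkerMem (m + 1) _), sub_zero]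
      · have e1 : T (m + 1) (D (m + 1) y.1) = k - Dt m (T m y.1) := by
          rw [hkdef]; exact (add_sub_cancel_left _ _).symm
        have e2 : Dt m (T m y.1) = k - T (m + 1) (D (m + 1) y.1) := by
          rw [hkdef]; exact (add_sub_cancel_right _ _).symm
        have eL : Dt (m + 1) y.2 + Dt (m + 1) (T (m + 1) (D (m + 1) y.1 - S (m + 1) y.2))
            = Dt (m + 1) k + Dt (m + 1) (Pker (m + 1) y.2) := by
          rw [map_sub, hTS, e1]
          simp only [map_sub, map_add, hDtDt]
          abel
        have eR : Pker (m + 1) (y.2 + Dt m (T m y.1)) = Pker (m + 1) y.2 + k := by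
          rw [e2, map_add, map_sub, hkfix (m + 1) k (LinearMap.mem_ker.mpr hk),
            hTker, sub_zero]
        rw [eL, eR]
        have hkp : S (m + 1) (k + Pker (m + 1) y.2) = 0 := by
          rw [map_add, hk, ← ContinuousLinearMap.coe_coe (S (m + 1)), LinearMap.mem_ker.mp (hPkerMem (m + 1) y.2), add_zero]
        have eK : Pker (m + 1 + 1) (Dt (m + 1) k + Dt (m + 1) (Pker (m + 1) y.2))
            = Dt (m + 1) k + Dt (m + 1) (Pker (m + 1) y.2) := by
          rw [← map_add]
          exact hDtk _ hkp
        rw [eK, hkdef]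
        simp only [map_add, hDtDt]
        abel
  · -- projection property
    intro i hi y
    by_cases h2 : i ≤ J
    · simp only [piMap, if_pos h2, ContinuousLinearMap.prod_apply,
        ContinuousLinearMap.comp_apply, ContinuousLinearMap.sub_apply,
        ContinuousLinearMap.id_apply, ContinuousLinearMap.coe_fst',
        Prod.mk.injEq]
      simp only [hprojQ, sub_zero]
      simp
    · obtain ⟨m, rfl⟩ : ∃ m, i = m + 1 := ⟨i - 1, by omega⟩
      simp only [piMap, if_neg h2, ContinuousLinearMap.prod_apply,
        ContinuousLinearMap.comp_apply, ContinuousLinearMap.add_apply,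
        ContinuousLinearMap.coe_fst', ContinuousLinearMap.coe_snd',
        ContinuousLinearMap.zero_apply, Prod.mk.injEq, map_zero, add_zero]
      refine ⟨by trivial, ?_⟩
      exact hkfix (m + 1) _ (hPkerMem (m + 1) _)


end
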